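/- For every infinite group G, the family Sp_G of all sparse subsets of G is a left and right translation invariant ideal on G containing all finite sets. -/

import Mathlib

/-- A subset `A` of a group `G` is sparse if for every infinite `X ⊆ G`
there is a finite `F ⊆ X` with `⋂_{g ∈ F} gA` finite. -/
def IsSparse {G : Type*} [Group G] (A : Set G) : Prop :=
  ∀ X : Set G, X.Infinite → ∃ F : Set G, F ⊆ X ∧ F.Finite ∧
    (⋂ g ∈ F, (fun x => g * x) '' A).Finite

section Aux

open Filter Set

variable {G : Type*} [Group G] [Infinite G]

lemma sparse_of_finite (A : Set G) (hA : A.Finite) : IsSparse A := by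
  intro X hX
  obtain ⟨x, hx⟩ := hX.nonempty
  refine ⟨{x}, by simpa using hx, Set.finite_singleton x, ?_⟩
  rw [Set.biInter_singleton]
  exact hA.image _

lemma sparse_mono (A : Set G) (hA : IsSparse A) (B : Set G) (hBA : B ⊆ A) : IsSparse B := by
  intro X hX
  obtain ⟨F, hFX, hFfin, hFint⟩ := hA X hX
  refine ⟨F, hFX, hFfin, hFint.subset ?_⟩
  exact Set.iInter₂_mono fun g _ => Set.image_mono hBA

/-- every member of an ultrafilter finer than a filter below `cofinite` is infinite -/
lemma infinite_of_mem {U : Ultrafilter G} (hU : (U : Filter G) ≤ cofinite) {s : Set G}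
    (hs : s ∈ U) : s.Infinite := by
  intro hfin
  have h1 : sᶜ ∈ (U : Filter G) := hU hfin.compl_mem_cofinite
  have : (∅ : Set G) ∈ (U : Filter G) := by
    have := Filter.inter_mem hs h1
    simpa using this
  exact (Filter.empty_notMem _) this

lemma sparse_union (A B : Set G) (hA : IsSparse A) (hB : IsSparse B) : IsSparse (A ∪ B) := by
  intro X hX
  by_contra hcon
  push_neg at hcon
  have hbig : ∀ F : Set G, F ⊆ X → F.Finite →
      (⋂ g ∈ F, (fun x => g * x) '' (A ∪ B)).Infinite := by
    intro F h1 h2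
    by_contra h3
    rw [Set.not_infinite] at h3
    exact hcon F h1 h2 h3
  -- the filter generated by cofinite sets and the translates of `A ∪ B` by elements of `X`
  set f : Filter G := cofinite ⊓ ⨅ g : X, 𝓟 ((fun x => (g : G) * x) '' (A ∪ B)) with hf
  have hne : f.NeBot := by
    rw [Filter.neBot_iff]
    intro hbot
    have h0 : (∅ : Set G) ∈ f := by rw [hbot]; exact Filter.mem_bot
    rw [hf, Filter.mem_inf_iff] at h0
    obtain ⟨s, hs, t, ht, hst⟩ := h0
    rw [Filter.mem_iInf] at ht
    obtain ⟨I, hIfin, V, hV, rfl⟩ := ht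
    set D : Set G := ⋂ g ∈ (Subtype.val '' I : Set G), (fun x => g * x) '' (A ∪ B) with hD
    have hsub : D ⊆ ⋂ i, V i := by
      refine Set.subset_iInter fun i => ?_
      refine Set.Subset.trans ?_ (Filter.mem_principal.mp (hV i))
      rw [hD, Set.biInter_image]
      exact Set.biInter_subset_of_mem i.2
    have hinf : D.Infinite := by
      refine hbig _ ?_ (hIfin.image _)
      rintro g ⟨i, hi, rfl⟩
      exact i.2
    have hne' : (D ∩ s).Nonempty := by
      rw [Filter.mem_cofinite] at hs
      have : (D \ sᶜ).Infinite := hinf.diff hs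
      obtain ⟨x, hx⟩ := this.nonempty
      exact ⟨x, hx.1, by simpa using hx.2⟩
    obtain ⟨x, hxD, hxs⟩ := hne'
    have : x ∈ s ∩ ⋂ i, V i := ⟨hxs, hsub hxD⟩
    rw [← hst] at this
    exact this
  obtain ⟨U, hU⟩ := Ultrafilter.exists_le f
  have hUcof : (U : Filter G) ≤ cofinite := hU.trans inf_le_left
  have hmem : ∀ g ∈ X, (fun x => g * x) '' (A ∪ B) ∈ U := by
    intro g hg
    have hle : f ≤ 𝓟 ((fun x => g * x) '' (A ∪ B)) := by
      rw [hf]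
      exact inf_le_right.trans (iInf_le (fun g : X => 𝓟 ((fun x => (g : G) * x) '' (A ∪ B))) ⟨g, hg⟩)
    exact hU (Filter.le_principal_iff.mp hle)
  -- split X according to which translate is in U
  set Y : Set G := {g ∈ X | (fun x => g * x) '' A ∈ U} with hY
  set Z : Set G := {g ∈ X | (fun x => g * x) '' B ∈ U} with hZ
  have hXYZ : X ⊆ Y ∪ Z := by
    intro g hg
    have := hmem g hg
    rw [Set.image_union] at this
    rcases Ultrafilter.union_mem_iff.mp this with h | h
    · exact Or.inl ⟨hg, h⟩
    · exact Or.inr ⟨hg, h⟩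
  have : Y.Infinite ∨ Z.Infinite := by
    rw [← Set.infinite_union]
    exact hX.mono hXYZ
  -- in either case, we contradict sparseness
  have key : ∀ (C : Set G), IsSparse C → ∀ W : Set G, W.Infinite →
      (∀ g ∈ W, (fun x => g * x) '' C ∈ U) → False := by
    intro C hC W hW hWU
    obtain ⟨F, hFW, hFfin, hFint⟩ := hC W hW
    have : (⋂ g ∈ F, (fun x => g * x) '' C) ∈ U :=
      (Filter.biInter_mem hFfin).2 fun g hg => hWU g (hFW hg)
    exact infinite_of_mem hUcof this hFint
  rcases this with h | h
  · exact key A hA Y h fun g hg => hg.2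
  · exact key B hB Z h fun g hg => hg.2

lemma sparse_mul_left (g : G) (A : Set G) (hA : IsSparse A) :
    IsSparse ((fun x => g * x) '' A) := by
  intro X hX
  have hX' : ((fun x => x * g) '' X).Infinite :=
    hX.image (Set.injOn_of_injective (fun a b h => by simpa using mul_right_cancel h))
  obtain ⟨F', hF'X, hF'fin, hF'int⟩ := hA _ hX'
  refine ⟨(fun x => x * g⁻¹) '' F', ?_, hF'fin.image _, ?_⟩
  · rintro _ ⟨k, hk, rfl⟩
    obtain ⟨x, hx, rfl⟩ := hF'X hk
    simpa using hx
  · have : (⋂ k ∈ (fun x => x * g⁻¹) '' F', (fun x => k * x) '' ((fun x => g * x) '' A)) =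
        ⋂ k ∈ F', (fun x => k * x) '' A := by
      rw [Set.biInter_image]
      refine Set.iInter₂_congr fun k hk => ?_
      rw [Set.image_image]
      congr 1
      funext x
      group
    rw [this]
    exact hF'int

lemma sparse_mul_right (g : G) (A : Set G) (hA : IsSparse A) :
    IsSparse ((fun x => x * g) '' A) := by
  intro X hX
  obtain ⟨F, hFX, hFfin, hFint⟩ := hA X hX
  refine ⟨F, hFX, hFfin, ?_⟩
  have : (⋂ k ∈ F, (fun x => k * x) '' ((fun x => x * g) '' A)) =
      (fun x => x * g) '' ⋂ k ∈ F, (fun x => k * x) '' A := by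
    rw [Set.image_iInter₂ (Group.mulRight_bijective g)]
    refine Set.iInter₂_congr fun k hk => ?_
    rw [Set.image_image, Set.image_image]
    refine Set.image_congr fun x _ => ?_
    simp [mul_assoc]
  rw [this]
  exact (hFint).image _

end Aux

theorem stmt7 {G : Type*} [Group G] [Infinite G] :
    (∀ A : Set G, A.Finite → IsSparse A) ∧
    (∀ A : Set G, IsSparse A → ∀ B ⊆ A, IsSparse B) ∧
    (∀ A B : Set G, IsSparse A → IsSparse B → IsSparse (A ∪ B)) ∧
    (∀ g : G, ∀ A : Set G, IsSparse A → IsSparse ((fun x => g * x) '' A)) ∧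
    (∀ g : G, ∀ A : Set G, IsSparse A → IsSparse ((fun x => x * g) '' A)) := by
  refine ⟨sparse_of_finite, fun A hA B hB => sparse_mono A hA B hB,
    sparse_union, sparse_mul_left, sparse_mul_right⟩
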